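/- Let (X_n)_{n≥0} be a transient, weakly symmetric, suffix-irreducible random walk on a regular language over a finite alphabet 𝒜 which is not expanding. Then there is a finite set F of infinite words ξ ∈ 𝒜^ℕ such that almost surely there exists ξ ∈ F with: for every N ∈ ℕ there is n₀ ∈ ℕ such that for all n ≥ n₀ the word X_n has length at least N and its first N letters agree with the first N letters of ξ. (In other words, the random limiting infinite word X_∞ of the transient walk has finite support.) -/

import Mathlib

open MeasureTheory Filter Topology
open scoped ENNReal Classical

/-- A random walk on a regular language over the finite alphabet `A`:
a Markov chain on finite words whose one-step transitions replace at most the last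
two letters of the current word by a (nonempty, from long words) word of length at
most three, with probabilities `p` depending only on the last two letters of the
current word and on the replacing word. -/
structure RLRW (A : Type) [Fintype A] [DecidableEq A] where
  /-- the local transition probabilities -/
  p : List A → List A → ℝ
  /-- the full one-step transition probabilities between words -/
  step : List A → List A → ℝ
  step_nonneg : ∀ u v, 0 ≤ step u v
  step_hasSum : ∀ u, HasSum (step u) 1
  /-- from a word of length `≥ 2`, the last two letters are replaced by a word of
  length `1`, `2` or `3`, with probability depending only on these data -/
  step_long : ∀ (w x y : List A), x.length = 2 → 1 ≤ y.length → y.length ≤ 3 →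
    step (w ++ x) (w ++ y) = p x y
  /-- transitions from words of length `≤ 1` -/
  step_short : ∀ (x y : List A), x.length ≤ 1 → y.length ≤ x.length + 1 → step x y = p x y
  /-- no other transition is possible -/
  step_support : ∀ u v, 0 < step u v →
    ∃ w x y : List A, u = w ++ x ∧ v = w ++ y ∧ x.length = min u.length 2 ∧
      y.length ≤ x.length + 1 ∧ x.length ≤ y.length + 1

namespace RLRW

variable {A : Type} [Fintype A] [DecidableEq A]

/-- `n`-step transition probabilities `p⁽ⁿ⁾(u,v)`. -/
noncomputable def pstep (M : RLRW A) : ℕ → List A → List A → ℝ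
  | 0, u, v => if u = v then 1 else 0
  | (n + 1), u, v => ∑' w : List A, M.pstep n u w * M.step w v

/-- `n`-step transition probabilities where all the words visited at times `1,…,n`
are required to lie in the set `S`. -/
noncomputable def pstepIn (M : RLRW A) (S : Set (List A)) : ℕ → List A → List A → ℝ
  | 0, u, v => if u = v then 1 else 0
  | (n + 1), u, v => if v ∈ S then ∑' w : List A, M.pstepIn S n u w * M.step w v else 0

/-- The set `ℒ` of words accessible from the empty word. -/
def Lang (M : RLRW A) : Set (List A) := {w | ∃ n, 0 < M.pstep n [] w}

/-- Weak symmetry of the random walk. -/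
def WeaklySymmetric (M : RLRW A) : Prop := ∀ u v, 0 < M.step u v → 0 < M.step v u

/-- Suffix-irreducibility of the random walk. -/
def SuffixIrreducible (M : RLRW A) : Prop :=
  ∀ (w₀ : List A) (a₀ b₀ : A), w₀ ++ [a₀, b₀] ∈ M.Lang → ∀ a b : A,
    ∃ (n : ℕ) (w₁ : List A),
      0 < M.pstepIn {v | (w₀ ++ [a₀, b₀]).length ≤ v.length} n (w₀ ++ [a₀, b₀])
          (w₀ ++ w₁ ++ [a, b])

/-- Transience of the random walk restricted to `ℒ` (finiteness of the Green function). -/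
def Transient (M : RLRW A) : Prop := ∀ w ∈ M.Lang, Summable fun n => M.pstep n w w

/-- Recurrence of the random walk restricted to `ℒ`. -/
def Recurrent (M : RLRW A) : Prop := ∀ w ∈ M.Lang, ¬ Summable fun n => M.pstep n w w

/-- The entropy sequence `E[-log π_n(X_n)] = ∑_w π_n(w)·(-log π_n(w))`, where `π_n`
is the distribution of `X_n`. -/
noncomputable def entropySeq (M : RLRW A) (n : ℕ) : ℝ :=
  ∑' w : List A, M.pstep n [] w * (-Real.log (M.pstep n [] w))

/-- `X` is (a version of) the random walk given by `M`, started at the empty word,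
on the probability space `(Ω, P)`: its finite-dimensional distributions are the ones
prescribed by the one-step transition probabilities. -/
def IsRandomWalk (M : RLRW A) {Ω : Type} [MeasurableSpace Ω] (P : Measure Ω)
    (X : ℕ → Ω → List A) : Prop :=
  ∀ (n : ℕ) (w : ℕ → List A),
    P {ω | ∀ i ≤ n, X i ω = w i} =
      ENNReal.ofReal ((if w 0 = ([] : List A) then 1 else 0) *
        ∏ i ∈ Finset.range n, M.step (w i) (w (i + 1)))

/-- The word formed by the last two letters of `w`. -/
def lastTwo (w : List A) : List A := w.drop (w.length - 2)

/-- The cone rooted at `w₀`: all words `w` of length `≥ |w₀|` reachable from `w₀` by a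
path through words of length `≥ |w₀|`. -/
def Cone (M : RLRW A) (w₀ : List A) : Set (List A) :=
  {w | ∃ (n : ℕ) (f : ℕ → List A), f 0 = w₀ ∧ f n = w ∧
    (∀ i ≤ n, w₀.length ≤ (f i).length) ∧ ∀ i < n, 0 < M.step (f i) (f (i + 1))}

/-- The boundary `∂C(w)` of a cone. -/
def coneBoundary (M : RLRW A) (w : List A) : Set (List A) :=
  {w' | w' ∈ M.Cone w ∧ w'.length = w.length ∧ ∃ w'', w'' ∉ M.Cone w ∧ 0 < M.step w' w''}

/-- The random walk is expanding if every cone rooted at a word of `ℒ` contains two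
disjoint proper subcones rooted at words of `ℒ`. -/
def Expanding (M : RLRW A) : Prop :=
  ∀ w₀ ∈ M.Lang, 2 ≤ w₀.length →
    ∃ w₁ w₂ : List A, w₁ ∈ M.Lang ∧ w₂ ∈ M.Lang ∧ w₁ ∈ M.Cone w₀ ∧ w₂ ∈ M.Cone w₀ ∧
      M.Cone w₁ ⊂ M.Cone w₀ ∧ M.Cone w₂ ⊂ M.Cone w₀ ∧ M.Cone w₁ ∩ M.Cone w₂ = ∅

/-- Probability of a first visit to `v` at time exactly `n` (for `n ≥ 1`),
starting from `u`. -/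
noncomputable def firstVisit (M : RLRW A) : ℕ → List A → List A → ℝ
  | 0, _, _ => 0
  | 1, u, v => M.step u v
  | (n + 2), u, v => ∑' w : List A, if w = v then 0 else M.step u w * M.firstVisit (n + 1) w v

/-- The hitting probability `P[∃ n ≥ 0 : X_n = v | X_0 = u]`. -/
noncomputable def hitProb (M : RLRW A) (u v : List A) : ℝ :=
  if u = v then 1 else ∑' n : ℕ, M.firstVisit n u v

/-- The Greenian distance `d_Green(u,v) = - log P[∃ n ≥ 0 : X_n = v | X_0 = u]`. -/
noncomputable def dGreen (M : RLRW A) (u v : List A) : ℝ := -Real.log (M.hitProb u v)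

/-- The last-visit generating function `L(o,w|1)`. -/
noncomputable def lastVisitGF (M : RLRW A) (w : List A) : ℝ :=
  ∑' n : ℕ, M.pstepIn {v | v ≠ ([] : List A)} n [] w

end RLRW

namespace RLRW

variable {A : Type} [Fintype A] [DecidableEq A] (M : RLRW A)

lemma step_le_one (u v : List A) : M.step u v ≤ 1 :=
  le_hasSum (M.step_hasSum u) v (fun j _ => M.step_nonneg u j)

/-- The `n`-step transition kernel, with values in `ℝ≥0∞`. -/
noncomputable def q (M : RLRW A) : ℕ → List A → List A → ℝ≥0∞
  | 0, u, v => if u = v then 1 else 0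
  | (n + 1), u, v => ∑' w : List A, q M n u w * ENNReal.ofReal (M.step w v)

lemma q_zero (u v : List A) : M.q 0 u v = if u = v then 1 else 0 := rfl

lemma q_succ (n : ℕ) (u v : List A) :
    M.q (n + 1) u v = ∑' w : List A, M.q n u w * ENNReal.ofReal (M.step w v) := rfl

lemma pstep_zero (u v : List A) : M.pstep 0 u v = if u = v then 1 else 0 := rfl

lemma pstep_succ (n : ℕ) (u v : List A) :
    M.pstep (n + 1) u v = ∑' w : List A, M.pstep n u w * M.step w v := rfl

lemma pstepIn_zero (S : Set (List A)) (u v : List A) :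
    M.pstepIn S 0 u v = if u = v then 1 else 0 := rfl

lemma pstepIn_succ (S : Set (List A)) (n : ℕ) (u v : List A) :
    M.pstepIn S (n + 1) u v =
      if v ∈ S then ∑' w : List A, M.pstepIn S n u w * M.step w v else 0 := rfl

lemma tsum_ofReal_step (u : List A) :
    ∑' v : List A, ENNReal.ofReal (M.step u v) = 1 := by
  rw [← ENNReal.ofReal_tsum_of_nonneg (M.step_nonneg u) (M.step_hasSum u).summable,
    (M.step_hasSum u).tsum_eq]
  simp

lemma tsum_q_le_one : ∀ n (u : List A), ∑' v : List A, M.q n u v ≤ 1 := by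
  intro n
  induction n with
  | zero =>
    intro u
    have : ∑' v : List A, M.q 0 u v = 1 := by
      simp only [q_zero]
      rw [tsum_eq_single u] <;> simp +contextual [eq_comm]
    exact this.le
  | succ n ih =>
    intro u
    calc ∑' v : List A, M.q (n+1) u v
        = ∑' (v : List A) (w : List A), M.q n u w * ENNReal.ofReal (M.step w v) := by
          simp_rw [q_succ]
      _ = ∑' (w : List A) (v : List A), M.q n u w * ENNReal.ofReal (M.step w v) :=
          ENNReal.tsum_comm
      _ = ∑' (w : List A), M.q n u w * ∑' (v : List A), ENNReal.ofReal (M.step w v) := by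
          simp_rw [ENNReal.tsum_mul_left]
      _ = ∑' (w : List A), M.q n u w := by simp [tsum_ofReal_step]
      _ ≤ 1 := ih u

lemma q_le_one (n : ℕ) (u v : List A) : M.q n u v ≤ 1 :=
  le_trans (ENNReal.le_tsum v) (M.tsum_q_le_one n u)

lemma q_ne_top (n : ℕ) (u v : List A) : M.q n u v ≠ ⊤ :=
  ne_top_of_le_ne_top ENNReal.one_ne_top (M.q_le_one n u v)

lemma pstep_eq_q (n : ℕ) (u v : List A) : M.pstep n u v = (M.q n u v).toReal := by
  induction n generalizing v with
  | zero => rw [pstep_zero, q_zero]; split <;> simp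
  | succ n ih =>
    rw [pstep_succ]
    have h1 : ∀ w : List A, M.pstep n u w * M.step w v
        = (M.q n u w * ENNReal.ofReal (M.step w v)).toReal := by
      intro w
      rw [ENNReal.toReal_mul, ih, ENNReal.toReal_ofReal (M.step_nonneg w v)]
    rw [tsum_congr h1, ← ENNReal.tsum_toReal_eq, ← q_succ]
    · intro w
      exact ENNReal.mul_ne_top (M.q_ne_top n u w) ENNReal.ofReal_ne_top

lemma pstep_nonneg (n : ℕ) (u v : List A) : 0 ≤ M.pstep n u v := by
  rw [pstep_eq_q]; exact ENNReal.toReal_nonneg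

lemma q_eq_ofReal_pstep (n : ℕ) (u v : List A) :
    M.q n u v = ENNReal.ofReal (M.pstep n u v) := by
  rw [pstep_eq_q, ENNReal.ofReal_toReal (M.q_ne_top n u v)]

lemma q_pos_of_pstep_pos {n : ℕ} {u v : List A} (h : 0 < M.pstep n u v) :
    0 < M.q n u v := by
  rw [q_eq_ofReal_pstep]; exact ENNReal.ofReal_pos.2 h

lemma pstep_pos_of_q_pos {n : ℕ} {u v : List A} (h : 0 < M.q n u v) :
    0 < M.pstep n u v := by
  rw [pstep_eq_q]
  exact ENNReal.toReal_pos h.ne' (M.q_ne_top n u v)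

lemma q_one (u v : List A) : M.q 1 u v = ENNReal.ofReal (M.step u v) := by
  rw [q_succ, tsum_eq_single u]
  · simp [q_zero]
  · intro w hw
    simp [q_zero, Ne.symm hw]

lemma q_mul_le (a : ℕ) (u w : List A) :
    ∀ b (v : List A), M.q a u w * M.q b w v ≤ M.q (a + b) u v := by
  intro b
  induction b with
  | zero =>
    intro v
    by_cases h : w = v
    · subst h; simp [q_zero]
    · simp [q_zero, h]
  | succ b ih =>
    intro v
    calc M.q a u w * M.q (b+1) w v
        = ∑' z : List A, M.q a u w * (M.q b w z * ENNReal.ofReal (M.step z v)) := by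
          rw [q_succ, ← ENNReal.tsum_mul_left]
      _ ≤ ∑' z : List A, M.q (a+b) u z * ENNReal.ofReal (M.step z v) := by
          refine ENNReal.tsum_le_tsum fun z => ?_
          rw [← mul_assoc]
          exact mul_le_mul_left (ih z) _
      _ = M.q (a + (b+1)) u v := by
          rw [show a + (b+1) = (a+b) + 1 by ring, q_succ]

lemma q_path_le (f : ℕ → List A) (n : ℕ) :
    ∏ i ∈ Finset.range n, ENNReal.ofReal (M.step (f i) (f (i+1))) ≤ M.q n (f 0) (f n) := by
  induction n with
  | zero => simp [q_zero]
  | succ n ih =>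
    rw [Finset.prod_range_succ]
    calc (∏ i ∈ Finset.range n, ENNReal.ofReal (M.step (f i) (f (i+1))))
          * ENNReal.ofReal (M.step (f n) (f (n+1)))
        ≤ M.q n (f 0) (f n) * M.q 1 (f n) (f (n+1)) := by
          rw [q_one]; exact mul_le_mul_left ih _
      _ ≤ M.q (n + 1) (f 0) (f (n+1)) := M.q_mul_le n (f 0) (f n) 1 (f (n+1))

lemma exists_path_of_q_pos :
    ∀ n {u v : List A}, 0 < M.q n u v →
      ∃ f : ℕ → List A, f 0 = u ∧ f n = v ∧ ∀ i < n, 0 < M.step (f i) (f (i+1)) := by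
  intro n
  induction n with
  | zero =>
    intro u v h
    have huv : u = v := by
      by_contra hne
      simp [q_zero, hne] at h
    exact ⟨fun _ => u, rfl, huv, by omega⟩
  | succ n ih =>
    intro u v h
    have : ∃ z : List A, 0 < M.q n u z * ENNReal.ofReal (M.step z v) := by
      by_contra hc
      push_neg at hc
      have : ∀ z : List A, M.q n u z * ENNReal.ofReal (M.step z v) = 0 :=
        fun z => le_antisymm (hc z) zero_le
      have h0 : M.q (n+1) u v = 0 := by
        rw [q_succ]
        simp [this]
      rw [h0] at h; exact lt_irrefl 0 h
    obtain ⟨z, hz⟩ := this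
    have hq : 0 < M.q n u z := by
      rcases eq_or_ne (M.q n u z) 0 with h0 | h0
      · simp [h0] at hz
      · exact pos_iff_ne_zero.2 h0
    have hs : 0 < M.step z v := by
      rcases le_or_gt (M.step z v) 0 with h0 | h0
      · rw [ENNReal.ofReal_eq_zero.2 h0, mul_zero] at hz; exact absurd hz (lt_irrefl 0)
      · exact h0
    obtain ⟨f, hf0, hfn, hfs⟩ := ih hq
    refine ⟨fun i => if i ≤ n then f i else v, by simp [hf0], by simp, ?_⟩
    intro i hi
    rcases lt_or_eq_of_le (Nat.lt_succ_iff.1 hi) with hi' | hi'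
    · simpa [Nat.le_of_lt hi', Nat.succ_le_of_lt hi'] using hfs i hi'
    · subst hi'
      simpa [Nat.lt_irrefl, hfn] using hs

end RLRW
namespace RLRW

variable {A : Type} [Fintype A] [DecidableEq A] (M : RLRW A)

lemma lang_nil : ([] : List A) ∈ M.Lang :=
  ⟨0, by simp [pstep_zero]⟩

lemma lang_iff_q (w : List A) : w ∈ M.Lang ↔ ∃ n, 0 < M.q n [] w := by
  constructor
  · rintro ⟨n, hn⟩; exact ⟨n, M.q_pos_of_pstep_pos hn⟩
  · rintro ⟨n, hn⟩; exact ⟨n, M.pstep_pos_of_q_pos hn⟩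

lemma lang_of_step {v z : List A} (hv : v ∈ M.Lang) (h : 0 < M.step v z) :
    z ∈ M.Lang := by
  rw [lang_iff_q] at hv ⊢
  obtain ⟨n, hn⟩ := hv
  refine ⟨n + 1, lt_of_lt_of_le ?_ (M.q_mul_le n [] v 1 z)⟩
  rw [q_one]
  exact ENNReal.mul_pos hn.ne' (ENNReal.ofReal_pos.2 h).ne'

lemma lang_of_path {v : List A} (hv : v ∈ M.Lang) (f : ℕ → List A) (hf0 : f 0 = v)
    (n : ℕ) (hsteps : ∀ i < n, 0 < M.step (f i) (f (i+1))) : f n ∈ M.Lang := by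
  induction n with
  | zero => rw [hf0]; exact hv
  | succ n ih =>
    exact M.lang_of_step (ih (fun i hi => hsteps i (by omega))) (hsteps n (by omega))

lemma exists_return {w : List A} (hWS : M.WeaklySymmetric) (hw : w ∈ M.Lang) :
    ∃ m, 0 < M.q m w [] := by
  obtain ⟨n, hn⟩ := (M.lang_iff_q w).1 hw
  obtain ⟨f, hf0, hfn, hsteps⟩ := M.exists_path_of_q_pos n hn
  set g : ℕ → List A := fun i => f (n - i) with hg
  have hg0 : g 0 = w := by simp [hg, hfn]
  have hgn : g n = [] := by simp [hg, hf0]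
  have hgsteps : ∀ i < n, 0 < M.step (g i) (g (i+1)) := by
    intro i hi
    have h1 : (n - i - 1) + 1 = n - i := by omega
    have h2 : 0 < M.step (f (n - i - 1)) (f (n - i - 1 + 1)) := hsteps _ (by omega)
    rw [h1] at h2
    have := hWS _ _ h2
    simpa [hg, show n - (i+1) = n - i - 1 by omega] using this
  refine ⟨n, lt_of_lt_of_le ?_ (by simpa [hg0, hgn] using M.q_path_le g n)⟩
  rw [pos_iff_ne_zero, Finset.prod_ne_zero_iff]
  intro i hi
  exact (ENNReal.ofReal_pos.2 (hgsteps i (Finset.mem_range.1 hi))).ne'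

lemma green_nil_ne_top (hT : M.Transient) : ∑' n, M.q n [] ([] : List A) ≠ ⊤ := by
  have h : ∀ n, M.q n [] ([] : List A) = ENNReal.ofReal (M.pstep n [] []) :=
    fun n => M.q_eq_ofReal_pstep n [] []
  rw [tsum_congr h, ← ENNReal.ofReal_tsum_of_nonneg (fun n => M.pstep_nonneg n [] [])
    (hT [] M.lang_nil)]
  exact ENNReal.ofReal_ne_top

lemma green_ne_top (hT : M.Transient) (hWS : M.WeaklySymmetric) (w : List A) :
    ∑' n, M.q n [] w ≠ ⊤ := by
  by_cases hw : w ∈ M.Lang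
  · obtain ⟨m, hm⟩ := M.exists_return hWS hw
    have key : ∀ n, M.q n [] w ≤ M.q (n + m) [] [] / M.q m w [] := by
      intro n
      rw [ENNReal.le_div_iff_mul_le (Or.inl hm.ne') (Or.inl (M.q_ne_top m w []))]
      exact M.q_mul_le n [] w m []
    have h2 : ∑' n, M.q (n + m) [] ([] : List A) ≤ ∑' n, M.q n [] ([] : List A) :=
      ENNReal.tsum_comp_le_tsum_of_injective (add_left_injective m) _
    have h3 : ∑' n, M.q n [] w ≤ (∑' n, M.q n [] ([] : List A)) / M.q m w [] := by
      refine le_trans (ENNReal.tsum_le_tsum key) ?_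
      simp_rw [div_eq_mul_inv]
      rw [ENNReal.tsum_mul_right]
      exact mul_le_mul_left h2 _
    exact ne_top_of_le_ne_top
      (ENNReal.div_lt_top (M.green_nil_ne_top hT) hm.ne').ne h3
  · have h : ∀ n, M.q n [] w = 0 := by
      intro n
      rw [M.q_eq_ofReal_pstep n [] w, ENNReal.ofReal_eq_zero]
      by_contra hc
      exact hw ⟨n, lt_of_le_of_ne (M.pstep_nonneg n [] w) (by intro h'; exact hc (by linarith))⟩
    simp [h]

end RLRW
namespace RLRW

variable {A : Type} [Fintype A] [DecidableEq A] (M : RLRW A)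

lemma step_len {u v : List A} (h : 0 < M.step u v) :
    u.length ≤ v.length + 1 ∧ v.length ≤ u.length + 1 := by
  obtain ⟨w, x, y, hu, hv, hx, hy1, hy2⟩ := M.step_support u v h
  have h1 := congrArg List.length hu
  have h2 := congrArg List.length hv
  simp only [List.length_append] at h1 h2
  omega

lemma step_take {u v : List A} (h : 0 < M.step u v) {k : ℕ} (hk : k + 2 ≤ u.length) :
    u.take k = v.take k := by
  obtain ⟨w, x, y, hu, hv, hx, hy1, hy2⟩ := M.step_support u v h
  have hx2 : x.length = 2 := by omega
  have hw : k ≤ w.length := by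
    have h1 := congrArg List.length hu
    simp only [List.length_append] at h1
    omega
  rw [hu, hv, List.take_append_of_le_length hw, List.take_append_of_le_length hw]

lemma step_translate (u u' : List A) {c₁ c₂ : List A} (hc : 2 ≤ c₁.length)
    (h : 0 < M.step (u ++ c₁) (u ++ c₂)) : 0 < M.step (u' ++ c₁) (u' ++ c₂) := by
  obtain ⟨w, x, y, hu, hv, hx, hy1, hy2⟩ := M.step_support _ _ h
  have hx2 : x.length = 2 := by
    simp only [List.length_append] at hx
    omega
  have hulen : u.length ≤ w.length := by
    have h1 := congrArg List.length hu
    simp only [List.length_append] at h1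
    omega
  have hupre : u <+: w :=
    List.prefix_of_prefix_length_le (by rw [← hu]; exact u.prefix_append c₁)
      (w.prefix_append x) hulen
  obtain ⟨d, hd⟩ := hupre
  have hc₁ : c₁ = d ++ x := by
    apply List.append_cancel_left (as := u)
    rw [hu, ← hd, List.append_assoc]
  have hc₂ : c₂ = d ++ y := by
    apply List.append_cancel_left (as := u)
    rw [hv, ← hd, List.append_assoc]
  have hyb : 1 ≤ y.length ∧ y.length ≤ 3 := by omega
  have hval : M.step (u ++ c₁) (u ++ c₂) = M.p x y := by
    rw [hc₁, hc₂, ← List.append_assoc, ← List.append_assoc]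
    exact M.step_long (u ++ d) x y hx2 hyb.1 hyb.2
  have hval' : M.step (u' ++ c₁) (u' ++ c₂) = M.p x y := by
    rw [hc₁, hc₂, ← List.append_assoc, ← List.append_assoc]
    exact M.step_long (u' ++ d) x y hx2 hyb.1 hyb.2
  rw [hval']
  rw [hval] at h
  exact h

lemma cone_self (w₀ : List A) : w₀ ∈ M.Cone w₀ :=
  ⟨0, fun _ => w₀, rfl, rfl, fun i _ => le_rfl, fun i hi => absurd hi (by omega)⟩

lemma cone_length {w₀ w : List A} (h : w ∈ M.Cone w₀) : w₀.length ≤ w.length := by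
  obtain ⟨n, f, hf0, hfn, hflen, _⟩ := h
  simpa [hfn] using hflen n le_rfl

lemma cone_trans {w₀ w w' : List A} (h : w ∈ M.Cone w₀) (h' : w' ∈ M.Cone w) :
    w' ∈ M.Cone w₀ := by
  obtain ⟨m, f, hf0, hfm, hflen, hfstep⟩ := h
  obtain ⟨k, g, hg0, hgk, hglen, hgstep⟩ := h'
  have hl : w₀.length ≤ w.length := by simpa [hfm] using hflen m le_rfl
  refine ⟨m + k, fun i => if i ≤ m then f i else g (i - m), by simp [hf0], ?_, ?_, ?_⟩
  · by_cases hk : k = 0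
    · subst hk
      simp only [Nat.add_zero, le_refl, if_pos]
      rw [hfm, ← hg0, hgk]
    · have hmk : ¬ (m + k ≤ m) := by omega
      simp [hmk, show m + k - m = k by omega, hgk]
  · intro i hi
    by_cases him : i ≤ m
    · simpa [him] using hflen i him
    · simp only [him, if_neg, if_false]
      exact le_trans hl (hglen (i - m) (by omega))
  · intro i hi
    by_cases h1 : i + 1 ≤ m
    · simp only [show i ≤ m by omega, h1, if_pos]
      exact hfstep i (by omega)
    · by_cases h2 : i ≤ m
      · have him : i = m := by omega
        subst him
        simp only [le_refl, if_pos, h1, if_neg, if_false, show i + 1 - i = 1 by omega]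
        rw [hfm, ← hg0]
        exact hgstep 0 (by omega)
      · simp only [h2, h1, if_neg, if_false]
        rw [show i + 1 - m = (i - m) + 1 by omega]
        exact hgstep (i - m) (by omega)

lemma cone_subset {w₀ w : List A} (h : w ∈ M.Cone w₀) : M.Cone w ⊆ M.Cone w₀ :=
  fun _ h' => M.cone_trans h h'

lemma path_take {f : ℕ → List A} {L k : ℕ} (hk : k + 2 ≤ L) (n : ℕ)
    (hlen : ∀ i ≤ n, L ≤ (f i).length) (hstep : ∀ i < n, 0 < M.step (f i) (f (i+1))) :
    (f n).take k = (f 0).take k := by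
  induction n with
  | zero => rfl
  | succ n ih =>
    rw [← M.step_take (hstep n (by omega)) (by have := hlen n (by omega); omega)]
    exact ih (fun i hi => hlen i (by omega)) (fun i hi => hstep i (by omega))

lemma cone_take {w₀ w : List A} (h : w ∈ M.Cone w₀) {k : ℕ} (hk : k + 2 ≤ w₀.length) :
    w.take k = w₀.take k := by
  obtain ⟨n, f, hf0, hfn, hflen, hfstep⟩ := h
  rw [← hfn, ← hf0]
  exact M.path_take hk n (fun i hi => hflen i hi) hfstep

lemma cone_lang {w₀ w : List A} (hw₀ : w₀ ∈ M.Lang) (h : w ∈ M.Cone w₀) : w ∈ M.Lang := by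
  obtain ⟨n, f, hf0, hfn, _, hfstep⟩ := h
  rw [← hfn]
  exact M.lang_of_path hw₀ f hf0 n hfstep

lemma cone_translate (u : List A) {z : List A} (hz : 2 ≤ z.length) :
    M.Cone (u ++ z) = (u ++ ·) '' M.Cone z := by
  ext w
  constructor
  · rintro ⟨n, f, hf0, hfn, hflen, hfstep⟩
    simp only [List.length_append] at hflen
    have htake : ∀ i ≤ n, (f i).take u.length = u := by
      intro i hi
      have h1 : (f i).take u.length = (f 0).take u.length :=
        M.path_take (L := u.length + z.length) (by omega) i
          (fun j hj => by have := hflen j (by omega); omega)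
          (fun j hj => hfstep j (by omega))
      rw [h1, hf0, List.take_append_of_le_length le_rfl]
      simp
    have hfi : ∀ i ≤ n, f i = u ++ (f i).drop u.length := by
      intro i hi
      conv_lhs => rw [← List.take_append_drop u.length (f i)]
      rw [htake i hi]
    have hlendrop : ∀ i ≤ n, z.length ≤ ((f i).drop u.length).length := by
      intro i hi
      rw [List.length_drop]
      have := hflen i hi
      omega
    refine ⟨(f n).drop u.length, ⟨n, fun i => (f i).drop u.length, ?_, rfl, ?_, ?_⟩, ?_⟩
    · show (f 0).drop u.length = z
      rw [hf0]
      exact List.drop_left (l₁ := u) (l₂ := z)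
    · intro i hi
      show z.length ≤ ((f i).drop u.length).length
      exact hlendrop i hi
    · intro i hi
      show 0 < M.step ((f i).drop u.length) ((f (i+1)).drop u.length)
      have hs := hfstep i hi
      rw [hfi i (by omega), hfi (i+1) (by omega)] at hs
      have hdl : 2 ≤ ((f i).drop u.length).length := by
        have := hlendrop i (by omega); omega
      have := M.step_translate u [] hdl hs
      simpa using this
    · show u ++ (f n).drop u.length = w
      rw [← hfi n le_rfl, hfn]
  · rintro ⟨z', ⟨n, g, hg0, hgn, hglen, hgstep⟩, rfl⟩
    refine ⟨n, fun i => u ++ g i, by show u ++ g 0 = u ++ z; rw [hg0],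
      by show u ++ g n = u ++ z'; rw [hgn], ?_, ?_⟩
    · intro i hi
      simp only [List.length_append]
      have := hglen i hi
      omega
    · intro i hi
      show 0 < M.step (u ++ g i) (u ++ g (i+1))
      have hs := hgstep i hi
      have hs' : 0 < M.step ([] ++ g i) ([] ++ g (i+1)) := by simpa using hs
      exact M.step_translate [] u (by have := hglen i (by omega); omega) hs'

lemma exists_two {w : List A} (h : 2 ≤ w.length) : ∃ u a b, w = u ++ [a, b] := by
  rcases hrev : w.reverse with _ | ⟨b, t1⟩
  · rw [List.reverse_eq_nil_iff] at hrev
    rw [hrev] at h; simp at h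
  · rcases ht1 : t1 with _ | ⟨a, t⟩
    · rw [ht1] at hrev
      have := congrArg List.length hrev
      simp at this; omega
    · rw [ht1] at hrev
      have hw : w = (b :: a :: t).reverse := by rw [← hrev, List.reverse_reverse]
      exact ⟨t.reverse, a, b, by rw [hw]; simp⟩

lemma pstepIn_nonneg (S : Set (List A)) : ∀ n (u v : List A), 0 ≤ M.pstepIn S n u v := by
  intro n
  induction n with
  | zero => intro u v; rw [pstepIn_zero]; positivity
  | succ n ih =>
    intro u v
    rw [pstepIn_succ]
    split
    · exact tsum_nonneg fun w => mul_nonneg (ih u w) (M.step_nonneg w v)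
    · exact le_rfl

lemma pstepIn_path {S : Set (List A)} :
    ∀ n {u z : List A}, 0 < M.pstepIn S n u z →
      ∃ f : ℕ → List A, f 0 = u ∧ f n = z ∧ (∀ i, 1 ≤ i → i ≤ n → f i ∈ S) ∧
        ∀ i < n, 0 < M.step (f i) (f (i+1)) := by
  intro n
  induction n with
  | zero =>
    intro u z h
    have huz : u = z := by
      by_contra hne
      rw [pstepIn_zero, if_neg hne] at h
      exact lt_irrefl 0 h
    exact ⟨fun _ => u, rfl, huz, fun i h1 h2 => absurd (le_trans h1 h2) (by omega), by omega⟩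
  | succ n ih =>
    intro u z h
    rw [pstepIn_succ] at h
    by_cases hzS : z ∈ S
    · rw [if_pos hzS] at h
      have hterm : ∃ w : List A, 0 < M.pstepIn S n u w * M.step w z := by
        by_contra hc
        push_neg at hc
        have hz : ∀ w : List A, M.pstepIn S n u w * M.step w z = 0 := fun w =>
          le_antisymm (hc w) (mul_nonneg (M.pstepIn_nonneg S n u w) (M.step_nonneg w z))
        rw [tsum_congr hz, tsum_zero] at h
        exact lt_irrefl 0 h
      obtain ⟨w, hw⟩ := hterm
      have hp : 0 < M.pstepIn S n u w := by
        rcases lt_or_ge 0 (M.pstepIn S n u w) with h' | h'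
        · exact h'
        · have : M.pstepIn S n u w = 0 := le_antisymm h' (M.pstepIn_nonneg S n u w)
          rw [this, zero_mul] at hw
          exact absurd hw (lt_irrefl 0)
      have hs : 0 < M.step w z := by
        rcases lt_or_ge 0 (M.step w z) with h' | h'
        · exact h'
        · have : M.step w z = 0 := le_antisymm h' (M.step_nonneg w z)
          rw [this, mul_zero] at hw
          exact absurd hw (lt_irrefl 0)
      obtain ⟨f, hf0, hfn, hfS, hfstep⟩ := ih hp
      refine ⟨fun i => if i ≤ n then f i else z, by simp [hf0], by simp, ?_, ?_⟩
      · intro i h1 h2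
        by_cases hin : i ≤ n
        · simpa [hin] using hfS i h1 hin
        · simpa [hin] using hzS
      · intro i hi
        rcases lt_or_eq_of_le (Nat.lt_succ_iff.1 hi) with hi' | hi'
        · simpa [Nat.le_of_lt hi', Nat.succ_le_of_lt hi'] using hfstep i hi'
        · subst hi'
          simpa [Nat.lt_irrefl, hfn] using hs
    · rw [if_neg hzS] at h
      exact absurd h (lt_irrefl 0)

/-- `ξ` is the end of the cone at `v` along some admissible trajectory. -/
def IsEnd (M : RLRW A) (v : List A) (ξ : ℕ → A) : Prop :=
  ∃ f : ℕ → List A, f 0 = v ∧ (∀ i, 0 < M.step (f i) (f (i+1))) ∧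
    (∀ i, v.length ≤ (f i).length) ∧
    ∀ N : ℕ, ∃ n₀ : ℕ, ∀ n, n₀ ≤ n →
      N ≤ (f n).length ∧ (f n).take N = List.ofFn (fun i : Fin N => ξ i)

lemma expanding_of_branch (hSI : M.SuffixIrreducible) (v : List A) (hvL : v ∈ M.Lang)
    (hv2 : 2 ≤ v.length) (w₁ w₂ : List A) (h₁C : w₁ ∈ M.Cone v) (h₂C : w₂ ∈ M.Cone v)
    (hlen₁ : v.length < w₁.length) (hlen₂ : v.length < w₂.length)
    (hdisj : M.Cone w₁ ∩ M.Cone w₂ = ∅) : M.Expanding := by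
  intro wh hwhL hwh2
  obtain ⟨wh0, ah, bh, hwheq⟩ := exists_two hwh2
  obtain ⟨v₀, a, b, hveq⟩ := exists_two hv2
  obtain ⟨m, w', hpos⟩ := hSI wh0 ah bh (hwheq ▸ hwhL) a b
  obtain ⟨f, hf0, hfm, hfS, hfstep⟩ := M.pstepIn_path m hpos
  set u'' : List A := wh0 ++ w' with hu''
  have hv''eq : wh0 ++ w' ++ [a, b] = u'' ++ [a, b] := rfl
  have hv''C : wh0 ++ w' ++ [a, b] ∈ M.Cone wh := by
    rw [hwheq]
    refine ⟨m, f, hf0, hfm, ?_, hfstep⟩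
    intro i hi
    rcases Nat.eq_zero_or_pos i with h0 | h0
    · subst h0; rw [hf0]
    · exact hfS i h0 hi
  have hab2 : 2 ≤ ([a, b] : List A).length := by simp
  -- decompose w₁, w₂ over the cone at v = v₀ ++ [a,b]
  have hconev : M.Cone v = (v₀ ++ ·) '' M.Cone [a, b] := by
    rw [hveq]; exact M.cone_translate v₀ hab2
  rw [hconev] at h₁C h₂C
  obtain ⟨z₁, hz₁C, hz₁e'⟩ := h₁C
  obtain ⟨z₂, hz₂C, hz₂e'⟩ := h₂C
  replace hz₁e : v₀ ++ z₁ = w₁ := hz₁e'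
  replace hz₂e : v₀ ++ z₂ = w₂ := hz₂e'
  have hz₁len : 2 ≤ z₁.length := by simpa using M.cone_length hz₁C
  have hz₂len : 2 ≤ z₂.length := by simpa using M.cone_length hz₂C
  have hz₁len3 : 3 ≤ z₁.length := by
    have := congrArg List.length hz₁e
    have hveql := congrArg List.length hveq
    simp only [List.length_append] at this hveql ⊢
    simp at hveql
    omega
  have hz₂len3 : 3 ≤ z₂.length := by
    have := congrArg List.length hz₂e
    have hveql := congrArg List.length hveq
    simp only [List.length_append] at this hveql ⊢
    simp at hveql
    omega
  have hconev'' : M.Cone (u'' ++ [a, b]) = (u'' ++ ·) '' M.Cone [a, b] :=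
    M.cone_translate u'' hab2
  have hr₁C : u'' ++ z₁ ∈ M.Cone (wh0 ++ w' ++ [a, b]) := by
    rw [hv''eq, hconev'']; exact ⟨z₁, hz₁C, rfl⟩
  have hr₂C : u'' ++ z₂ ∈ M.Cone (wh0 ++ w' ++ [a, b]) := by
    rw [hv''eq, hconev'']; exact ⟨z₂, hz₂C, rfl⟩
  have hr₁Cwh : u'' ++ z₁ ∈ M.Cone wh := M.cone_trans hv''C hr₁C
  have hr₂Cwh : u'' ++ z₂ ∈ M.Cone wh := M.cone_trans hv''C hr₂C
  have hwhlen : wh.length ≤ u''.length + 2 := by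
    have h1 := M.cone_length hv''C
    simp only [hu'', List.length_append, List.length_cons, List.length_nil] at h1 ⊢
    omega
  have hnotmem : ∀ z : List A, 3 ≤ z.length → wh ∉ M.Cone (u'' ++ z) := by
    intro z hz3 hmem
    have := M.cone_length hmem
    simp only [List.length_append] at this
    omega
  refine ⟨u'' ++ z₁, u'' ++ z₂, M.cone_lang hwhL hr₁Cwh, M.cone_lang hwhL hr₂Cwh, hr₁Cwh, hr₂Cwh,
    ?_, ?_, ?_⟩
  · rw [Set.ssubset_iff_of_subset (M.cone_subset hr₁Cwh)]
    exact ⟨wh, M.cone_self wh, hnotmem z₁ hz₁len3⟩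
  · rw [Set.ssubset_iff_of_subset (M.cone_subset hr₂Cwh)]
    exact ⟨wh, M.cone_self wh, hnotmem z₂ hz₂len3⟩
  · rw [Set.eq_empty_iff_forall_notMem]
    rintro y ⟨hy₁, hy₂⟩
    rw [M.cone_translate u'' hz₁len] at hy₁
    rw [M.cone_translate u'' hz₂len] at hy₂
    obtain ⟨e₁, he₁C, he₁'⟩ := hy₁
    obtain ⟨e₂, he₂C, he₂'⟩ := hy₂
    replace he₁ : u'' ++ e₁ = y := he₁'
    replace he₂ : u'' ++ e₂ = y := he₂'
    have he : e₁ = e₂ := List.append_cancel_left (he₁.trans he₂.symm)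
    have hm₁ : v₀ ++ e₁ ∈ M.Cone w₁ := by
      rw [← hz₁e, M.cone_translate v₀ hz₁len]; exact ⟨e₁, he₁C, rfl⟩
    have hm₂ : v₀ ++ e₁ ∈ M.Cone w₂ := by
      rw [← hz₂e, M.cone_translate v₀ hz₂len]; exact ⟨e₂, he₂C, by rw [he]⟩
    have : v₀ ++ e₁ ∈ M.Cone w₁ ∩ M.Cone w₂ := ⟨hm₁, hm₂⟩
    rw [hdisj] at this
    exact this

lemma isEnd_subsingleton (hSI : M.SuffixIrreducible) (hNE : ¬ M.Expanding) {v : List A}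
    (hvL : v ∈ M.Lang) (hv2 : 2 ≤ v.length) {ξ η : ℕ → A} (hξ : M.IsEnd v ξ)
    (hη : M.IsEnd v η) : ξ = η := by
  by_contra hne
  have hex : ∃ k, ξ k ≠ η k := by
    by_contra hc
    push_neg at hc
    exact hne (funext hc)
  set k := Nat.find hex with hk
  have hkne : ξ k ≠ η k := Nat.find_spec hex
  have hPne : List.ofFn (fun i : Fin (k+1) => ξ i) ≠ List.ofFn (fun i : Fin (k+1) => η i) := by
    intro hcon
    rw [List.ofFn_inj] at hcon
    exact hkne (congrFun hcon ⟨k, by omega⟩)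
  obtain ⟨f, hf0, hfstep, hflen, hfpref⟩ := hξ
  obtain ⟨g, hg0, hgstep, hglen, hgpref⟩ := hη
  obtain ⟨n₁, hn₁⟩ := hfpref (k+1)
  obtain ⟨n₁', hn₁'⟩ := hfpref (max (k+3) (v.length+1))
  obtain ⟨n₂, hn₂⟩ := hgpref (k+1)
  obtain ⟨n₂', hn₂'⟩ := hgpref (max (k+3) (v.length+1))
  set N₁ := max n₁ n₁'
  set N₂ := max n₂ n₂'
  set w₁ := f N₁ with hw₁
  set w₂ := g N₂ with hw₂
  have hw₁take : w₁.take (k+1) = List.ofFn (fun i : Fin (k+1) => ξ i) :=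
    (hn₁ N₁ (le_max_left _ _)).2
  have hw₂take : w₂.take (k+1) = List.ofFn (fun i : Fin (k+1) => η i) :=
    (hn₂ N₂ (le_max_left _ _)).2
  have hw₁len : max (k+3) (v.length+1) ≤ w₁.length := (hn₁' N₁ (le_max_right _ _)).1
  have hw₂len : max (k+3) (v.length+1) ≤ w₂.length := (hn₂' N₂ (le_max_right _ _)).1
  have hw₁C : w₁ ∈ M.Cone v :=
    ⟨N₁, f, hf0, rfl, fun i _ => hflen i, fun i _ => hfstep i⟩
  have hw₂C : w₂ ∈ M.Cone v :=
    ⟨N₂, g, hg0, rfl, fun i _ => hglen i, fun i _ => hgstep i⟩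
  have hdisj : M.Cone w₁ ∩ M.Cone w₂ = ∅ := by
    rw [Set.eq_empty_iff_forall_notMem]
    rintro y ⟨hy₁, hy₂⟩
    have h1 : y.take (k+1) = w₁.take (k+1) :=
      M.cone_take hy₁ (by have := le_trans (le_max_left (k+3) (v.length+1)) hw₁len; omega)
    have h2 : y.take (k+1) = w₂.take (k+1) :=
      M.cone_take hy₂ (by have := le_trans (le_max_left (k+3) (v.length+1)) hw₂len; omega)
    exact hPne (by rw [← hw₁take, ← hw₂take, ← h1, ← h2])
  exact hNE (M.expanding_of_branch hSI v hvL hv2 w₁ w₂ hw₁C hw₂C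
    (by have := le_trans (le_max_right (k+3) (v.length+1)) hw₁len; omega)
    (by have := le_trans (le_max_right (k+3) (v.length+1)) hw₂len; omega) hdisj)

end RLRW
namespace RLRW

variable {A : Type} [Fintype A] [DecidableEq A] (M : RLRW A)

/-- The weight of a cylinder determined by `p : Fin (n+1) → List A`. -/
noncomputable def wt (M : RLRW A) (n : ℕ) (p : Fin (n+1) → List A) : ℝ≥0∞ :=
  ENNReal.ofReal ((if p 0 = [] then 1 else 0) *
    ∏ i : Fin n, M.step (p i.castSucc) (p i.succ))

lemma wt_prod_nonneg (n : ℕ) (p : Fin (n+1) → List A) :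
    0 ≤ (if p 0 = ([] : List A) then (1:ℝ) else 0) *
      ∏ i : Fin n, M.step (p i.castSucc) (p i.succ) := by
  apply mul_nonneg
  · split <;> norm_num
  · exact Finset.prod_nonneg fun i _ => M.step_nonneg _ _

variable {Ω : Type} [MeasurableSpace Ω] (P : MeasureTheory.Measure Ω) (X : ℕ → Ω → List A)

lemma meas_cyl (hX : M.IsRandomWalk P X) (n : ℕ) (p : Fin (n+1) → List A) :
    P {ω | ∀ i : Fin (n+1), X i ω = p i} = M.wt n p := by
  classical
  set w : ℕ → List A := fun i => if h : i < n+1 then p ⟨i, h⟩ else [] with hw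
  have hset : {ω | ∀ i : Fin (n+1), X i ω = p i} = {ω | ∀ i ≤ n, X i ω = w i} := by
    ext ω
    constructor
    · intro h i hi
      simp only [hw, dif_pos (by omega : i < n+1)]
      exact h ⟨i, by omega⟩
    · intro h i
      have := h i.1 (by omega)
      simpa [hw, dif_pos i.2, Nat.le_of_lt_succ i.2] using this
  rw [hset, hX n w]
  unfold wt
  congr 1
  have h0 : w 0 = p 0 := by simp [hw]
  rw [h0]
  congr 1
  rw [← Fin.prod_univ_eq_prod_range (fun i => M.step (w i) (w (i+1))) n]
  apply Finset.prod_congr rfl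
  intro i _
  have h1 : w i.1 = p i.castSucc := by
    simp only [hw, dif_pos (by omega : i.1 < n+1)]
    congr 1
  have h2 : w (i.1+1) = p i.succ := by
    simp only [hw, dif_pos (by omega : i.1+1 < n+1)]
    congr 1
  rw [h1, h2]

/-- The snoc equivalence for path spaces. -/
def snocEquiv (n : ℕ) : ((Fin (n+1) → List A) × List A) ≃ (Fin (n+2) → List A) where
  toFun x := Fin.snoc x.1 x.2
  invFun q := (Fin.init q, q (Fin.last (n+1)))
  left_inv x := by
    ext i
    · simp [Fin.init_snoc]
    · simp
  right_inv q := Fin.snoc_init_self q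

lemma wt_snoc (n : ℕ) (p : Fin (n+1) → List A) (a : List A) :
    M.wt (n+1) (Fin.snoc p a) = M.wt n p * ENNReal.ofReal (M.step (p (Fin.last n)) a) := by
  unfold wt
  rw [← ENNReal.ofReal_mul (M.wt_prod_nonneg n p), mul_assoc]
  congr 1
  have h0 : (Fin.snoc p a : Fin (n+2) → List A) 0 = p 0 := by
    have : (0 : Fin (n+2)) = Fin.castSucc 0 := rfl
    rw [this, Fin.snoc_castSucc]
  rw [h0]
  congr 1
  have hsplit : ∏ i : Fin (n+1),
      M.step ((Fin.snoc p a : Fin (n+2) → List A) i.castSucc)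
        ((Fin.snoc p a : Fin (n+2) → List A) i.succ)
      = (∏ i : Fin n,
          M.step ((Fin.snoc p a : Fin (n+2) → List A) i.castSucc.castSucc)
            ((Fin.snoc p a : Fin (n+2) → List A) i.castSucc.succ))
        * M.step ((Fin.snoc p a : Fin (n+2) → List A) (Fin.last n).castSucc)
            ((Fin.snoc p a : Fin (n+2) → List A) (Fin.last n).succ) :=
    Fin.prod_univ_castSucc _
  rw [hsplit]
  congr 1
  · apply Finset.prod_congr rfl
    intro i _
    rw [Fin.succ_castSucc]
    rw [show (i.castSucc.castSucc : Fin (n+2)) = Fin.castSucc i.castSucc from rfl,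
      Fin.snoc_castSucc, Fin.snoc_castSucc]
  · rw [Fin.succ_last, Fin.snoc_last,
      show ((Fin.last n).castSucc : Fin (n+2)) = Fin.castSucc (Fin.last n) from rfl,
      Fin.snoc_castSucc]

/-- Sum of cylinder weights with endpoint `w`. -/
noncomputable def pathSum (M : RLRW A) (n : ℕ) (w : List A) : ℝ≥0∞ :=
  ∑' p : Fin (n+1) → List A, if p (Fin.last n) = w then M.wt n p else 0

lemma pathSum_eq (n : ℕ) (w : List A) : M.pathSum n w = M.q n [] w := by
  induction n generalizing w with
  | zero =>
    unfold pathSum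
    rw [← Equiv.tsum_eq (Equiv.funUnique (Fin 1) (List A)).symm
      (fun p => if p (Fin.last 0) = w then M.wt 0 p else 0)]
    rw [tsum_eq_single w]
    · show (if w = w then M.wt 0 (fun _ => w) else 0) = M.q 0 [] w
      rw [if_pos rfl, q_zero]
      unfold wt
      rcases eq_or_ne ([] : List A) w with h | h
      · rw [if_pos h, ← h]
        simp
      · rw [if_neg h]
        have h2 : ¬ ((fun _ : Fin 1 => w) 0 = []) := fun hc => h (Eq.symm hc)
        simp only [Finset.univ_eq_empty, Finset.prod_empty, mul_one, if_neg h2]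
        simp
    · intro b hb
      show (if b = w then M.wt 0 (fun _ => b) else 0) = 0
      rw [if_neg hb]
  | succ n ih =>
    unfold pathSum
    rw [← Equiv.tsum_eq (snocEquiv n)
      (fun p => if p (Fin.last (n+1)) = w then M.wt (n+1) p else 0)]
    have hterm : ∀ x : (Fin (n+1) → List A) × List A,
        (if (snocEquiv n x) (Fin.last (n+1)) = w then M.wt (n+1) (snocEquiv n x) else 0)
        = if x.2 = w then M.wt n x.1 * ENNReal.ofReal (M.step (x.1 (Fin.last n)) x.2) else 0 := by
      rintro ⟨p, a⟩
      have hlast : (snocEquiv n (p, a)) (Fin.last (n+1)) = a := by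
        simp [snocEquiv]
      have hsnoc : M.wt (n+1) (snocEquiv n (p, a))
          = M.wt n p * ENNReal.ofReal (M.step (p (Fin.last n)) a) := M.wt_snoc n p a
      rw [hlast, hsnoc]
    rw [tsum_congr hterm, ENNReal.tsum_prod']
    have hinner : ∀ p : Fin (n+1) → List A,
        (∑' a : List A, if a = w then M.wt n p * ENNReal.ofReal (M.step (p (Fin.last n)) a)
          else 0) = M.wt n p * ENNReal.ofReal (M.step (p (Fin.last n)) w) := by
      intro p
      rw [tsum_eq_single w]
      · rw [if_pos rfl]
      · intro a ha
        rw [if_neg ha]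
    rw [tsum_congr hinner]
    have houter : ∀ p : Fin (n+1) → List A,
        M.wt n p * ENNReal.ofReal (M.step (p (Fin.last n)) w)
        = ∑' u : List A, if p (Fin.last n) = u then M.wt n p * ENNReal.ofReal (M.step u w)
            else 0 := by
      intro p
      rw [tsum_eq_single (p (Fin.last n))]
      · rw [if_pos rfl]
      · intro u hu
        rw [if_neg (Ne.symm hu)]
    rw [tsum_congr houter, ENNReal.tsum_comm, q_succ]
    apply tsum_congr
    intro u
    rw [← ih u]
    unfold pathSum
    rw [← ENNReal.tsum_mul_right]
    apply tsum_congr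
    intro p
    rw [ite_mul, zero_mul]

lemma meas_single_le (hX : M.IsRandomWalk P X) (n : ℕ) (w : List A) :
    P {ω | X n ω = w} ≤ M.q n [] w := by
  classical
  have hsub : {ω | X n ω = w} ⊆
      ⋃ p : {p : Fin (n+1) → List A // p (Fin.last n) = w}, {ω | ∀ i : Fin (n+1), X i ω = p.1 i} := by
    intro ω hω
    refine Set.mem_iUnion.2 ⟨⟨fun i => X i ω, ?_⟩, fun i => rfl⟩
    exact hω
  calc P {ω | X n ω = w}
      ≤ ∑' p : {p : Fin (n+1) → List A // p (Fin.last n) = w},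
          P {ω | ∀ i : Fin (n+1), X i ω = p.1 i} :=
        le_trans (measure_mono hsub) (measure_iUnion_le _)
    _ = ∑' p : {p : Fin (n+1) → List A // p (Fin.last n) = w}, M.wt n p.1 := by
        apply tsum_congr
        intro p
        exact M.meas_cyl P X hX n p.1
    _ = ∑' p : Fin (n+1) → List A,
          Set.indicator {p : Fin (n+1) → List A | p (Fin.last n) = w} (M.wt n) p :=
        (tsum_subtype _ _)
    _ = M.pathSum n w := by
        apply tsum_congr
        intro p
        rw [Set.indicator_apply]
        rfl
    _ = M.q n [] w := M.pathSum_eq n w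

lemma meas_pair_le (hX : M.IsRandomWalk P X) (n : ℕ) (u v : List A) :
    P {ω | X n ω = u ∧ X (n+1) ω = v} ≤ M.q n [] u * ENNReal.ofReal (M.step u v) := by
  classical
  have hsub : {ω | X n ω = u ∧ X (n+1) ω = v} ⊆
      ⋃ p : {p : Fin (n+2) → List A //
          p (Fin.castSucc (Fin.last n)) = u ∧ p (Fin.last (n+1)) = v},
        {ω | ∀ i : Fin (n+2), X i ω = p.1 i} := by
    rintro ω ⟨hω1, hω2⟩
    refine Set.mem_iUnion.2 ⟨⟨fun i => X i ω, ?_, ?_⟩, fun i => rfl⟩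
    · simpa using hω1
    · simpa using hω2
  have key : (∑' p : Fin (n+2) → List A,
      if p (Fin.castSucc (Fin.last n)) = u ∧ p (Fin.last (n+1)) = v then M.wt (n+1) p else 0)
      = M.q n [] u * ENNReal.ofReal (M.step u v) := by
    rw [← Equiv.tsum_eq (snocEquiv n) (fun p =>
      if p (Fin.castSucc (Fin.last n)) = u ∧ p (Fin.last (n+1)) = v then M.wt (n+1) p else 0)]
    have hterm : ∀ x : (Fin (n+1) → List A) × List A,
        (if (snocEquiv n x) (Fin.castSucc (Fin.last n)) = u ∧
            (snocEquiv n x) (Fin.last (n+1)) = v then M.wt (n+1) (snocEquiv n x) else 0)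
        = if x.2 = v then
            (if x.1 (Fin.last n) = u then M.wt n x.1 else 0) * ENNReal.ofReal (M.step u x.2)
          else 0 := by
      rintro ⟨p, a⟩
      have h1 : (snocEquiv n (p, a)) (Fin.castSucc (Fin.last n)) = p (Fin.last n) := by
        simp [snocEquiv]
      have h2 : (snocEquiv n (p, a)) (Fin.last (n+1)) = a := by
        simp [snocEquiv]
      have hsnoc : M.wt (n+1) (snocEquiv n (p, a))
          = M.wt n p * ENNReal.ofReal (M.step (p (Fin.last n)) a) := M.wt_snoc n p a
      rw [h1, h2, hsnoc]
      by_cases hp : p (Fin.last n) = u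
      · by_cases ha : a = v
        · rw [if_pos ⟨hp, ha⟩, if_pos ha, if_pos hp, hp]
        · rw [if_neg (by tauto), if_neg ha]
      · by_cases ha : a = v
        · rw [if_neg (by tauto), if_pos ha, if_neg hp, zero_mul]
        · rw [if_neg (by tauto), if_neg ha]
    rw [tsum_congr hterm, ENNReal.tsum_prod']
    have hinner : ∀ p : Fin (n+1) → List A,
        (∑' a : List A, if a = v then
          (if p (Fin.last n) = u then M.wt n p else 0) * ENNReal.ofReal (M.step u a) else 0)
        = (if p (Fin.last n) = u then M.wt n p else 0) * ENNReal.ofReal (M.step u v) := by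
      intro p
      rw [tsum_eq_single v]
      · rw [if_pos rfl]
      · intro a ha
        rw [if_neg ha]
    rw [tsum_congr hinner, ENNReal.tsum_mul_right, ← pathSum_eq]
    rfl
  calc P {ω | X n ω = u ∧ X (n+1) ω = v}
      ≤ ∑' p : {p : Fin (n+2) → List A //
            p (Fin.castSucc (Fin.last n)) = u ∧ p (Fin.last (n+1)) = v},
          P {ω | ∀ i : Fin (n+2), X i ω = p.1 i} :=
        le_trans (measure_mono hsub) (measure_iUnion_le _)
    _ = ∑' p : {p : Fin (n+2) → List A //
            p (Fin.castSucc (Fin.last n)) = u ∧ p (Fin.last (n+1)) = v},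
          M.wt (n+1) p.1 := by
        apply tsum_congr
        intro p
        exact M.meas_cyl P X hX (n+1) p.1
    _ = ∑' p : Fin (n+2) → List A,
          Set.indicator {p : Fin (n+2) → List A |
            p (Fin.castSucc (Fin.last n)) = u ∧ p (Fin.last (n+1)) = v} (M.wt (n+1)) p :=
        (tsum_subtype _ _)
    _ = M.q n [] u * ENNReal.ofReal (M.step u v) := by
        rw [← key]
        apply tsum_congr
        intro p
        rw [Set.indicator_apply]
        rfl

end RLRW
namespace RLRW

variable {A : Type} [Fintype A] [DecidableEq A] (M : RLRW A)

lemma ae_nice (hT : M.Transient) (hWS : M.WeaklySymmetric) {Ω : Type} [MeasurableSpace Ω]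
    (P : MeasureTheory.Measure Ω) (X : ℕ → Ω → List A) (hX : M.IsRandomWalk P X) :
    ∀ᵐ ω ∂P, X 0 ω = [] ∧ (∀ n, 0 < M.step (X n ω) (X (n+1) ω)) ∧
      ∀ w : List A, {n | X n ω = w}.Finite := by
  classical
  have h1 : ∀ᵐ ω ∂P, X 0 ω = [] := by
    rw [MeasureTheory.ae_iff]
    have hsub : {ω | ¬ X 0 ω = []} ⊆ ⋃ w : List A,
        if w = ([] : List A) then (∅ : Set Ω) else {ω | X 0 ω = w} := by
      intro ω hω
      exact Set.mem_iUnion.2 ⟨X 0 ω, by rw [if_neg hω]; exact Set.mem_setOf.2 rfl⟩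
    refine le_antisymm (le_trans (measure_mono hsub)
      (le_trans (measure_iUnion_le _) ?_)) zero_le
    have hz : ∀ w : List A,
        P (if w = ([] : List A) then (∅ : Set Ω) else {ω | X 0 ω = w}) = 0 := by
      intro w
      split
      · exact measure_empty
      · next h =>
        refine le_antisymm (le_trans (M.meas_single_le P X hX 0 w) ?_) zero_le
        rw [q_zero, if_neg (fun hc => h hc.symm)]
    simp [hz]
  have h2 : ∀ᵐ ω ∂P, ∀ n : ℕ, 0 < M.step (X n ω) (X (n+1) ω) := by
    rw [MeasureTheory.ae_all_iff]
    intro n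
    rw [MeasureTheory.ae_iff]
    have hsub : {ω | ¬ 0 < M.step (X n ω) (X (n+1) ω)} ⊆
        ⋃ uv : List A × List A, if 0 < M.step uv.1 uv.2 then (∅ : Set Ω)
          else {ω | X n ω = uv.1 ∧ X (n+1) ω = uv.2} := by
      intro ω hω
      exact Set.mem_iUnion.2 ⟨(X n ω, X (n+1) ω), by
        rw [if_neg hω]; exact Set.mem_setOf.2 ⟨rfl, rfl⟩⟩
    refine le_antisymm (le_trans (measure_mono hsub)
      (le_trans (measure_iUnion_le _) ?_)) zero_le
    have hz : ∀ uv : List A × List A,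
        P (if 0 < M.step uv.1 uv.2 then (∅ : Set Ω)
          else {ω | X n ω = uv.1 ∧ X (n+1) ω = uv.2}) = 0 := by
      intro uv
      split
      · exact measure_empty
      · next h =>
        have hle := M.meas_pair_le P X hX n uv.1 uv.2
        have h0 : ENNReal.ofReal (M.step uv.1 uv.2) = 0 := by
          rw [ENNReal.ofReal_eq_zero]
          exact le_of_not_gt h
        rw [h0, mul_zero] at hle
        exact le_antisymm hle zero_le
    simp [hz]
  have h3 : ∀ᵐ ω ∂P, ∀ w : List A, {n | X n ω = w}.Finite := by
    rw [MeasureTheory.ae_all_iff]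
    intro w
    have hsum : ∑' n, P {ω | X n ω = w} ≠ ⊤ :=
      ne_top_of_le_ne_top (M.green_ne_top hT hWS w)
        (ENNReal.tsum_le_tsum fun n => M.meas_single_le P X hX n w)
    exact MeasureTheory.ae_finite_setOf_mem hsum
  exact h1.and (h2.and h3)

end RLRW
/-- For a transient, weakly symmetric, suffix-irreducible random walk
on a regular language which is not expanding, there is a finite set `F` of infinite
words such that almost surely the walk converges to some infinite word of `F`
(prefixes of any fixed length eventually stabilize and agree with that word). -/
theorem nonexpanding_limit_words_finite
    {A : Type} [Fintype A] [DecidableEq A] (M : RLRW A)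
    (hT : M.Transient) (hWS : M.WeaklySymmetric) (hSI : M.SuffixIrreducible)
    (hNE : ¬ M.Expanding)
    {Ω : Type} [MeasurableSpace Ω] (P : MeasureTheory.Measure Ω)
    [MeasureTheory.IsProbabilityMeasure P]
    (X : ℕ → Ω → List A) (hX : M.IsRandomWalk P X) :
    ∃ F : Set (ℕ → A), F.Finite ∧
      ∀ᵐ ω ∂P, ∃ ξ ∈ F, ∀ N : ℕ, ∃ n₀ : ℕ, ∀ n, n₀ ≤ n →
        N ≤ (X n ω).length ∧ (X n ω).take N = List.ofFn (fun i : Fin N => ξ i) := by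
  classical
  set E : Set (List A) := {v | v ∈ M.Lang ∧ v.length = 2} with hE
  have hEfin : E.Finite := (List.finite_length_eq A 2).subset (fun v hv => hv.2)
  set F : Set (ℕ → A) := ⋃ v ∈ E, {ξ | M.IsEnd v ξ} with hF
  have hFfin : F.Finite := by
    refine hEfin.biUnion fun v hv => Set.Subsingleton.finite ?_
    intro ξ hξ η hη
    exact M.isEnd_subsingleton hSI hNE hv.1 (by rw [hv.2]) hξ hη
  refine ⟨F, hFfin, ?_⟩
  filter_upwards [M.ae_nice hT hWS P X hX] with ω hω
  obtain ⟨h0, hsteps, hfin⟩ := hω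
  -- lengths tend to infinity
  have hlen : ∀ L : ℕ, ∃ N, ∀ n, N ≤ n → L ≤ (X n ω).length := by
    intro L
    have hfin2 : {n | (X n ω).length < L}.Finite := by
      have hsub : {n | (X n ω).length < L} ⊆
          ⋃ w ∈ {w : List A | w.length < L}, {n | X n ω = w} := by
        intro n hn
        exact Set.mem_biUnion hn rfl
      exact ((List.finite_length_lt A L).biUnion (fun w _ => hfin w)).subset hsub
    obtain ⟨N, hN⟩ := hfin2.bddAbove
    refine ⟨N + 1, fun n hn => ?_⟩
    by_contra hc
    have : n ∈ {n | (X n ω).length < L} := by simpa using Nat.lt_of_not_le hc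
    have := hN this
    omega
  have hlang : ∀ n, X n ω ∈ M.Lang := by
    intro n
    induction n with
    | zero => rw [h0]; exact M.lang_nil
    | succ n ih => exact M.lang_of_step ih (hsteps n)
  -- the last time at length ≤ 2
  obtain ⟨N₃, hN₃⟩ := hlen 3
  set T := Nat.findGreatest (fun n => (X n ω).length ≤ 2) N₃ with hT'
  have hT0 : (X 0 ω).length ≤ 2 := by rw [h0]; simp
  have hTmem : (X T ω).length ≤ 2 := Nat.findGreatest_spec (P := fun n => (X n ω).length ≤ 2) (Nat.zero_le N₃) hT0
  have hTgt : ∀ m, T < m → 3 ≤ (X m ω).length := by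
    intro m hm
    by_cases hmN : m ≤ N₃
    · by_contra hc
      exact (Nat.findGreatest_is_greatest hm hmN) (by omega)
    · exact hN₃ m (by omega)
  have hT2 : (X T ω).length = 2 := by
    have h1 : 3 ≤ (X (T+1) ω).length := hTgt (T+1) (by omega)
    have h2 := (M.step_len (hsteps T)).2
    omega
  -- stabilization of prefixes
  have hstab : ∀ k : ℕ, ∃ N, (∀ n, N ≤ n → k + 2 ≤ (X n ω).length) ∧
      (∀ n, N ≤ n → (X n ω).take k = (X N ω).take k) := by
    intro k
    obtain ⟨N, hN⟩ := hlen (k + 2)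
    refine ⟨N, hN, ?_⟩
    have key : ∀ m : ℕ, (X (N + m) ω).take k = (X N ω).take k := by
      intro m
      induction m with
      | zero => rfl
      | succ m ih =>
        have hstep := hsteps (N + m)
        have hlen2 : k + 2 ≤ (X (N + m) ω).length := hN (N + m) (by omega)
        have := M.step_take hstep hlen2
        rw [show N + (m+1) = (N + m) + 1 by omega, ← this, ih]
    intro n hn
    have := key (n - N)
    rwa [show N + (n - N) = n by omega] at this
  choose Nf hNf1 hNf3 using hstab
  set c : ℕ → List A := fun k => (X (Nf k) ω).take k with hc
  have hclen : ∀ k, (c k).length = k := by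
    intro k
    have := hNf1 k (Nf k) le_rfl
    simp only [hc, List.length_take]
    omega
  have hcoh : ∀ j k, j ≤ k → c j = (c k).take j := by
    intro j k hjk
    set n := max (Nf j) (Nf k) with hn
    have h1 : c j = (X n ω).take j := (hNf3 j n (le_max_left _ _)).symm
    have h3 : (X n ω).take k = c k := hNf3 k n (le_max_right _ _)
    have h4 : ((X n ω).take k).take j = (c k).take j := by rw [h3]
    rw [List.take_take, min_eq_left hjk] at h4
    rw [h1, ← h4]
  have hc1ne : c 1 ≠ [] := by
    intro h
    have := hclen 1
    rw [h] at this
    simp at this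
  set ξ : ℕ → A := fun i => (c (i+1)).getD i ((c 1).head hc1ne) with hξ
  have hcofn : ∀ k, c k = List.ofFn (fun i : Fin k => ξ i) := by
    intro k
    apply List.ext_getElem
    · rw [hclen k, List.length_ofFn]
    · intro i h1 h2
      rw [List.getElem_ofFn]
      have hik : i < k := by rwa [hclen] at h1
      show (c k)[i] = (c (i+1)).getD i ((c 1).head hc1ne)
      have h4 : c (i+1) = (c k).take (i+1) := hcoh (i+1) k (by omega)
      have h5 : i < (c (i+1)).length := by rw [hclen]; omega
      rw [List.getD_eq_getElem _ _ h5, List.getElem_of_eq h4]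
      exact (List.getElem_take).symm
  refine ⟨ξ, ?_, ?_⟩
  · -- ξ ∈ F : it is the end of the cone at X T ω
    refine Set.mem_biUnion (show X T ω ∈ E from ⟨hlang T, hT2⟩) ?_
    show M.IsEnd (X T ω) ξ
    refine ⟨fun i => X (T + i) ω, rfl, ?_, ?_, ?_⟩
    · intro i
      show 0 < M.step (X (T + i) ω) (X (T + (i+1)) ω)
      have := hsteps (T + i)
      rwa [show T + (i+1) = (T + i) + 1 by omega]
    · intro i
      show (X T ω).length ≤ (X (T + i) ω).length
      rcases Nat.eq_zero_or_pos i with h | h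
      · subst h
        exact le_rfl
      · have := hTgt (T + i) (by omega)
        omega
    · intro N
      refine ⟨Nf N, fun n hn => ?_⟩
      have hTn : Nf N ≤ T + n := by omega
      constructor
      · show N ≤ (X (T + n) ω).length
        have := hNf1 N (T + n) hTn
        omega
      · show (X (T + n) ω).take N = _
        rw [hNf3 N (T + n) hTn]
        exact hcofn N
  · intro N
    refine ⟨Nf N, fun n hn => ?_⟩
    constructor
    · have := hNf1 N n hn
      omega
    · rw [hNf3 N n hn]
      exact hcofn N
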